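/- Let e^{-1} ≤ r₀ < 1. Then for every smooth function f : ℝ² → ℝ with f = 0 on the closed ball of radius r₀ centered at the origin, one has ∫_{B₁(0)} |∇f(x)|² dx − ∫₀^{2π} f(cos θ, sin θ)² dθ ≥ 0. (Consequently, the equatorial disc in the modified ball M_{r₀} has index ind_∂ equal to 0 when r₀ ≥ e^{-1}.) -/

import Mathlib

set_option maxHeartbeats 1000000
open MeasureTheory Real Set
open scoped ContDiff


noncomputable def uvec (θ : ℝ) : EuclideanSpace ℝ (Fin 2) :=
  (WithLp.equiv 2 (Fin 2 → ℝ)).symm ![Real.cos θ, Real.sin θ]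

lemma norm_uvec (θ : ℝ) : ‖uvec θ‖ = 1 := by
  rw [EuclideanSpace.norm_eq]
  simp [uvec, Fin.sum_univ_two, sq_abs, Real.cos_sq_add_sin_sq]

lemma norm_smul_uvec (r θ : ℝ) : ‖r • uvec θ‖ = |r| := by
  rw [norm_smul, norm_uvec, mul_one, Real.norm_eq_abs]

lemma hasDerivAt_ray {f : EuclideanSpace ℝ (Fin 2) → ℝ} (hf : ContDiff ℝ ∞ f) (θ r : ℝ) :
    HasDerivAt (fun s => f (s • uvec θ))
      (inner ℝ (gradient f (r • uvec θ)) (uvec θ)) r := by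
  have h1 : HasDerivAt (fun s : ℝ => s • uvec θ) (uvec θ) r := by
    simpa using (hasDerivAt_id r).smul_const (uvec θ)
  have h2 : HasFDerivAt f (fderiv ℝ f (r • uvec θ)) (r • uvec θ) :=
    (hf.differentiable (by simp) (r • uvec θ)).hasFDerivAt
  have := h2.comp_hasDerivAt r h1
  simpa [gradient, InnerProductSpace.toDual_symm_apply, Function.comp_def] using this

lemma continuous_gradient {f : EuclideanSpace ℝ (Fin 2) → ℝ} (hf : ContDiff ℝ ∞ f) :
    Continuous (gradient f) := by
  have : gradient f = fun x =>
      (InnerProductSpace.toDual ℝ (EuclideanSpace ℝ (Fin 2))).symm (fderiv ℝ f x) := rfl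
  rw [this]
  exact (LinearIsometryEquiv.continuous _).comp (hf.continuous_fderiv (by simp))

lemma intervalIntegral_integral_one_div {a b : ℝ} (h : (0:ℝ) ∉ Set.uIcc a b) :
    ∫ x : ℝ in a..b, 1 / x = Real.log (b / a) := by
  open intervalIntegral in exact integral_one_div h

lemma ray_bound (r₀ : ℝ) (hr₀e : Real.exp (-1) ≤ r₀) (hr₀1 : r₀ < 1)
    (f : EuclideanSpace ℝ (Fin 2) → ℝ) (hf : ContDiff ℝ ∞ f)
    (hf0 : ∀ x ∈ Metric.closedBall (0 : EuclideanSpace ℝ (Fin 2)) r₀, f x = 0) (θ : ℝ) :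
    f (uvec θ) ^ 2 ≤ ∫ r in (0:ℝ)..1, r * ‖gradient f (r • uvec θ)‖ ^ 2 := by
  have hr₀0 : 0 < r₀ := lt_of_lt_of_le (Real.exp_pos _) hr₀e
  have hr01 : r₀ ≤ 1 := hr₀1.le
  set d : ℝ → ℝ := fun r => inner ℝ (gradient f (r • uvec θ)) (uvec θ) with hd
  have hd_cont : Continuous d := by
    apply Continuous.inner
    · exact (continuous_gradient hf).comp ((continuous_id.smul continuous_const))
    · exact continuous_const
  have hd_le : ∀ r, |d r| ≤ ‖gradient f (r • uvec θ)‖ := by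
    intro r
    calc |d r| ≤ ‖gradient f (r • uvec θ)‖ * ‖uvec θ‖ := abs_real_inner_le_norm _ _
    _ = ‖gradient f (r • uvec θ)‖ := by rw [norm_uvec, mul_one]
  -- FTC
  have hftc : ∫ r in r₀..1, d r = f (uvec θ) := by
    have := intervalIntegral.integral_eq_sub_of_hasDerivAt
      (f := fun s => f (s • uvec θ)) (f' := d) (a := r₀) (b := 1)
      (fun r _ => hasDerivAt_ray hf θ r) (hd_cont.intervalIntegrable _ _)
    rw [this]
    simp only [one_smul]
    have : f (r₀ • uvec θ) = 0 := by
      apply hf0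
      simp [Metric.mem_closedBall, dist_eq_norm, norm_smul_uvec, abs_of_pos hr₀0]
    rw [this, sub_zero]
  set A : ℝ := ∫ r in r₀..1, r * d r ^ 2 with hA
  set L : ℝ := Real.log r₀⁻¹ with hL
  have hL_pos : 0 < L := Real.log_pos (by rw [lt_inv_comm₀] <;> simp [hr₀0, hr₀1])
  have hL_le : L ≤ 1 := by
    rw [hL, Real.log_inv]
    have := Real.log_le_log (Real.exp_pos _) hr₀e
    rw [Real.log_exp] at this
    linarith
  have hA_nonneg : 0 ≤ A := by
    apply intervalIntegral.integral_nonneg hr01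
    intro r hr
    have : 0 ≤ r := le_trans hr₀0.le hr.1
    positivity
  -- the AM-GM bound
  have key : ∀ c : ℝ, 0 < c → 2 * |f (uvec θ)| ≤ c * A + (1/c) * L := by
    intro c hc
    have habs : |f (uvec θ)| ≤ ∫ r in r₀..1, |d r| := by
      rw [← hftc]
      exact intervalIntegral.abs_integral_le_integral_abs hr01
    have hinv : IntervalIntegrable (fun r : ℝ => (1/c) * (1/r)) volume r₀ 1 := by
      apply ContinuousOn.intervalIntegrable
      apply ContinuousOn.mul continuousOn_const
      apply ContinuousOn.div continuousOn_const continuousOn_id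
      intro x hx
      rw [Set.uIcc_of_le hr01] at hx
      exact ne_of_gt (lt_of_lt_of_le hr₀0 hx.1)
    have he1 : IntervalIntegrable (fun r : ℝ => c * (r * d r ^ 2)) volume r₀ 1 := by
      apply Continuous.intervalIntegrable; fun_prop
    have habsint : IntervalIntegrable (fun r : ℝ => 2 * |d r|) volume r₀ 1 := by
      apply Continuous.intervalIntegrable; fun_prop
    have hint2 : IntervalIntegrable (fun r : ℝ => c * (r * d r ^ 2) + (1/c) * (1/r)) volume r₀ 1 :=
      he1.add hinv
    have hmono : ∫ r in r₀..1, 2 * |d r| ≤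
        ∫ r in r₀..1, (c * (r * d r ^ 2) + (1/c) * (1/r)) := by
      apply intervalIntegral.integral_mono_on hr01 habsint hint2
      intro r hr
      have hr0 : 0 < r := lt_of_lt_of_le hr₀0 hr.1
      have hcr : 0 < c * r := mul_pos hc hr0
      rw [← mul_le_mul_iff_of_pos_right hcr]
      have h1 : |d r| ^ 2 = d r ^ 2 := sq_abs _
      have h3 : (c * (r * d r ^ 2) + (1/c) * (1/r)) * (c * r)
          = (c * r) ^ 2 * (d r) ^ 2 + 1 := by
        field_simp
      rw [h3]
      nlinarith [sq_nonneg (c * r * |d r| - 1)]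
    have hsplit : ∫ r in r₀..1, (c * (r * d r ^ 2) + (1/c) * (1/r))
        = c * A + (1/c) * L := by
      rw [intervalIntegral.integral_add he1 hinv,
        intervalIntegral.integral_const_mul, intervalIntegral.integral_const_mul,
        intervalIntegral_integral_one_div
          (by rw [Set.uIcc_of_le hr01]; intro h; exact absurd h.1 (not_le.mpr hr₀0))]
      rw [hL, Real.log_inv]; norm_num; exact Or.inl rfl
    calc 2 * |f (uvec θ)| ≤ 2 * ∫ r in r₀..1, |d r| := by linarith
    _ = ∫ r in r₀..1, 2 * |d r| := by
        rw [intervalIntegral.integral_const_mul]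
    _ ≤ ∫ r in r₀..1, (c * (r * d r ^ 2) + (1/c) * (1/r)) := hmono
    _ = c * A + (1/c) * L := hsplit
  -- deduce f(uθ)² ≤ A
  have hsq : f (uvec θ) ^ 2 ≤ A := by
    rcases eq_or_lt_of_le hA_nonneg with hA0 | hA0
    · -- A = 0 : |f| ≤ L/(2c) for all c
      have hzero : f (uvec θ) = 0 := by
        by_contra h
        have habs : 0 < |f (uvec θ)| := abs_pos.mpr h
        have := key (L / |f (uvec θ)|) (div_pos hL_pos habs)
        rw [← hA0] at this
        have h2 : (1 / (L / |f (uvec θ)|)) * L = |f (uvec θ)| := by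
          field_simp
        rw [mul_zero, zero_add, h2] at this
        linarith
      rw [hzero]
      simpa using hA_nonneg
    · -- A > 0 : choose c = sqrt (L / A)
      set c : ℝ := Real.sqrt (L / A) with hc
      have hc_pos : 0 < c := Real.sqrt_pos.mpr (div_pos hL_pos hA0)
      have hc2 : c ^ 2 = L / A := Real.sq_sqrt (div_pos hL_pos hA0).le
      have hbound := key c hc_pos
      set s : ℝ := Real.sqrt (L * A) with hs
      have hs2 : s ^ 2 = L * A := Real.sq_sqrt (by positivity)
      have hsc : s * c = L := by
        have h1 : (s * c) ^ 2 = L ^ 2 := by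
          rw [mul_pow, hs2, hc2]
          field_simp
        have h2 : 0 ≤ s * c := by positivity
        nlinarith
      have heq : c * A + (1/c) * L = 2 * s := by
        have hcA : c * A = s := by
          have : (c * A) ^ 2 = s ^ 2 := by
            rw [mul_pow, hc2, hs2]; field_simp
          have h2 : 0 ≤ c * A := by positivity
          have h3 : 0 ≤ s := Real.sqrt_nonneg _
          nlinarith
        have hcL : (1/c) * L = s := by
          rw [← hsc]
          field_simp
        rw [hcA, hcL]; ring
      rw [heq] at hbound
      have hfs : |f (uvec θ)| ≤ s := by linarith
      calc f (uvec θ) ^ 2 = |f (uvec θ)| ^ 2 := (sq_abs _).symm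
      _ ≤ s ^ 2 := by nlinarith [abs_nonneg (f (uvec θ))]
      _ = L * A := hs2
      _ ≤ A := by nlinarith
  -- A ≤ ∫_0^1 r ‖∇f‖²
  refine le_trans hsq ?_
  set G : ℝ → ℝ := fun r => r * ‖gradient f (r • uvec θ)‖ ^ 2 with hG
  have hG_cont : Continuous G :=
    continuous_id.mul ((((continuous_gradient hf).comp
      (continuous_id.smul continuous_const)).norm).pow 2)
  have h1 : A ≤ ∫ r in r₀..1, G r := by
    apply intervalIntegral.integral_mono_on hr01 (by
      exact (continuous_id.mul (hd_cont.pow 2)).intervalIntegrable _ _)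
      (hG_cont.intervalIntegrable _ _)
    intro r hr
    have hr0 : (0:ℝ) ≤ r := le_trans hr₀0.le hr.1
    have := hd_le r
    have h2 : d r ^ 2 ≤ ‖gradient f (r • uvec θ)‖ ^ 2 := by
      nlinarith [abs_nonneg (d r), sq_abs (d r)]
    exact mul_le_mul_of_nonneg_left h2 hr0
  have h2 : ∫ r in r₀..1, G r ≤ ∫ r in (0:ℝ)..1, G r := by
    rw [← intervalIntegral.integral_add_adjacent_intervals
      (hG_cont.intervalIntegrable 0 r₀) (hG_cont.intervalIntegrable r₀ 1)]
    have : 0 ≤ ∫ r in (0:ℝ)..r₀, G r := by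
      apply intervalIntegral.integral_nonneg hr₀0.le
      intro r hr
      have : 0 ≤ r := hr.1
      positivity
    linarith
  linarith

lemma continuous_uvec : Continuous uvec := by
  apply (PiLp.continuous_toLp 2 (fun _ : Fin 2 => ℝ)).comp
  apply continuous_pi
  intro i
  fin_cases i <;> simp <;> fun_prop

noncomputable def eqE : EuclideanSpace ℝ (Fin 2) ≃ᵐ ℝ × ℝ :=
  (MeasurableEquiv.toLp 2 (Fin 2 → ℝ)).symm.trans MeasurableEquiv.finTwoArrow

lemma eqE_mp : MeasurePreserving (eqE) volume volume :=
  (EuclideanSpace.volume_preserving_symm_measurableEquiv_toLp (Fin 2)).trans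
    (volume_preserving_finTwoArrow ℝ)

lemma eqE_symm_apply (p : ℝ × ℝ) :
    eqE.symm p = (WithLp.equiv 2 (Fin 2 → ℝ)).symm ![p.1, p.2] := by
  have : eqE.symm p = (WithLp.equiv 2 (Fin 2 → ℝ)).symm
      (MeasurableEquiv.finTwoArrow.symm p) := rfl
  rw [this]
  congr 1

lemma eqE_symm_polar (r θ : ℝ) : eqE.symm (polarCoord.symm (r, θ)) = r • uvec θ := by
  rw [polarCoord_symm_apply, eqE_symm_apply]
  ext i
  fin_cases i <;> simp [uvec]

lemma polar_eq (g : EuclideanSpace ℝ (Fin 2) → ℝ) (hg : Continuous g) :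
    ∫ x in Metric.ball (0 : EuclideanSpace ℝ (Fin 2)) 1, g x
      = ∫ θ in (-π)..π, ∫ r in (0:ℝ)..1, r * g (r • uvec θ) := by
  set s : Set (ℝ × ℝ) := Ioo (0:ℝ) 1 ×ˢ Ioo (-π) π with hs
  have hs_meas : MeasurableSet s := measurableSet_Ioo.prod measurableSet_Ioo
  set h : ℝ × ℝ → ℝ := fun p => p.1 * g (p.1 • uvec p.2) with hh
  have hh_cont : Continuous h := by
    apply continuous_fst.mul
    exact hg.comp (continuous_fst.smul (continuous_uvec.comp continuous_snd))
  set K : ℝ × ℝ → ℝ := s.indicator h with hK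
  have hK_int : Integrable K := by
    rw [hK]
    apply (IntegrableOn.integrable_indicator · hs_meas)
    apply IntegrableOn.mono_set
      (hh_cont.continuousOn.integrableOn_compact (isCompact_Icc.prod isCompact_Icc))
    exact Set.prod_mono Set.Ioo_subset_Icc_self Set.Ioo_subset_Icc_self
  -- step: ball integral = ∫ K
  have step1 : ∫ x in Metric.ball (0 : EuclideanSpace ℝ (Fin 2)) 1, g x = ∫ q, K q := by
    rw [← integral_indicator measurableSet_ball]
    rw [← (eqE_mp.symm eqE).integral_comp eqE.symm.measurableEmbedding]
    rw [← integral_comp_polarCoord_symm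
      (fun p => (Metric.ball (0 : EuclideanSpace ℝ (Fin 2)) 1).indicator g (eqE.symm p))]
    rw [← integral_indicator polarCoord.open_target.measurableSet]
    congr 1
    funext p
    rcases p with ⟨r, θ⟩
    by_cases hp : (r, θ) ∈ polarCoord.target
    · have hr : 0 < r := hp.1
      rw [Set.indicator_of_mem hp]
      have hmem : (r • uvec θ ∈ Metric.ball (0 : EuclideanSpace ℝ (Fin 2)) 1) ↔ r < 1 := by
        rw [Metric.mem_ball, dist_zero_right, norm_smul_uvec, abs_of_pos hr]
      by_cases hr1 : r < 1
      · have hmem' : (r, θ) ∈ s := ⟨⟨hr, hr1⟩, hp.2⟩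
        rw [hK, Set.indicator_of_mem hmem', hh]
        simp only [eqE_symm_polar]
        rw [Set.indicator_of_mem (hmem.mpr hr1)]
        simp
      · have hmem' : (r, θ) ∉ s := fun hc => hr1 hc.1.2
        rw [hK, Set.indicator_of_notMem hmem']
        simp only [eqE_symm_polar]
        rw [Set.indicator_of_notMem (fun hc => hr1 (hmem.mp hc))]
        simp
    · rw [Set.indicator_of_notMem hp, hK, Set.indicator_of_notMem]
      intro hc
      exact hp ⟨hc.1.1, hc.2⟩
  rw [step1]
  -- step: Fubini
  have hK_int' : Integrable K ((volume : Measure ℝ).prod volume) := by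
    rwa [← Measure.volume_eq_prod]
  have step2 : ∫ q, K q = ∫ θ : ℝ, ∫ r : ℝ, K (r, θ) := by
    rw [Measure.volume_eq_prod, integral_prod K hK_int']
    exact integral_integral_swap hK_int'
  rw [step2]
  -- inner integral
  have step3 : ∀ θ : ℝ, ∫ r : ℝ, K (r, θ)
      = (Ioo (-π) π).indicator (fun θ => ∫ r in Ioo (0:ℝ) 1, r * g (r • uvec θ)) θ := by
    intro θ
    by_cases hθ : θ ∈ Ioo (-π) π
    · rw [Set.indicator_of_mem hθ]
      rw [← integral_indicator measurableSet_Ioo]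
      congr 1
      funext r
      by_cases hr : r ∈ Ioo (0:ℝ) 1
      · rw [hK, Set.indicator_of_mem (Set.mk_mem_prod hr hθ), Set.indicator_of_mem hr, hh]
      · rw [hK, Set.indicator_of_notMem (fun hc => hr hc.1), Set.indicator_of_notMem hr]
    · rw [Set.indicator_of_notMem hθ]
      have : ∀ r : ℝ, K (r, θ) = 0 := fun r =>
        Set.indicator_of_notMem (fun hc => hθ hc.2) _
      simp [this]
  simp_rw [step3]
  rw [integral_indicator measurableSet_Ioo]
  rw [intervalIntegral.integral_of_le (by linarith [Real.pi_pos] : -π ≤ π),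
    ← integral_Ioc_eq_integral_Ioo]
  apply setIntegral_congr_fun measurableSet_Ioc
  intro θ _
  beta_reduce
  rw [intervalIntegral.integral_of_le (by norm_num : (0:ℝ) ≤ 1), ← integral_Ioc_eq_integral_Ioo]


lemma cont_param {X : Type*} [TopologicalSpace X] {F : X → ℝ → ℝ}
    (hF : Continuous (Function.uncurry F)) (a b : ℝ) :
    Continuous fun x => ∫ t in a..b, F x t := by
  open intervalIntegral in
  exact continuous_parametric_intervalIntegral_of_continuous' hF a b

/-- **Stability of the equatorial disc in the modified ball `M_{r₀}` for `r₀ ≥ e⁻¹`.**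
If `e⁻¹ ≤ r₀ < 1`, then every smooth function `f : ℝ² → ℝ` vanishing on the closed ball of
radius `r₀` around the origin satisfies
`Q(f) = ∫_{B₁} |∇f|² − ∫₀^{2π} f(cos θ, sin θ)² dθ ≥ 0`. -/
theorem secondVariation_nonneg_of_inv_exp_le
    (r₀ : ℝ) (hr₀e : Real.exp (-1) ≤ r₀) (hr₀1 : r₀ < 1) :
    ∀ f : EuclideanSpace ℝ (Fin 2) → ℝ, ContDiff ℝ ∞ f →
      (∀ x ∈ Metric.closedBall (0 : EuclideanSpace ℝ (Fin 2)) r₀, f x = 0) →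
      0 ≤ (∫ x in Metric.ball (0 : EuclideanSpace ℝ (Fin 2)) 1, ‖gradient f x‖ ^ 2) -
        ∫ θ in (0:ℝ)..(2 * Real.pi),
          f ((WithLp.equiv 2 (Fin 2 → ℝ)).symm ![Real.cos θ, Real.sin θ]) ^ 2 := by
  intro f hf hf0
  have hg_cont : Continuous (fun x => ‖gradient f x‖ ^ 2) :=
    ((continuous_gradient hf).norm).pow 2
  have hpolar := polar_eq (fun x => ‖gradient f x‖ ^ 2) hg_cont
  have hP_cont : Continuous (fun θ => f (uvec θ) ^ 2) :=
    ((hf.continuous).comp continuous_uvec).pow 2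
  have hP_per : Function.Periodic (fun θ => f (uvec θ) ^ 2) (2 * π) := by
    intro θ
    simp only [uvec, Real.cos_add_two_pi, Real.sin_add_two_pi]
  have hper : ∫ θ in (0:ℝ)..(2 * π), f (uvec θ) ^ 2 = ∫ θ in (-π)..π, f (uvec θ) ^ 2 := by
    have h := hP_per.intervalIntegral_add_eq 0 (-π)
    rw [zero_add] at h
    rw [h]
    congr 1
    ring
  have hH_cont : Continuous (fun θ => ∫ r in (0:ℝ)..1, r * ‖gradient f (r • uvec θ)‖ ^ 2) := by
    apply cont_param
    have : Continuous fun p : ℝ × ℝ => p.2 * ‖gradient f (p.2 • uvec p.1)‖ ^ 2 := by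
      apply continuous_snd.mul
      exact (hg_cont.comp (continuous_snd.smul (continuous_uvec.comp continuous_fst)))
    exact this
  have hmono : ∫ θ in (-π)..π, f (uvec θ) ^ 2 ≤
      ∫ θ in (-π)..π, ∫ r in (0:ℝ)..1, r * ‖gradient f (r • uvec θ)‖ ^ 2 := by
    apply intervalIntegral.integral_mono_on (by linarith [Real.pi_pos])
      (hP_cont.intervalIntegrable _ _) (hH_cont.intervalIntegrable _ _)
    intro θ _
    exact ray_bound r₀ hr₀e hr₀1 f hf hf0 θ
  have hbdy : (∫ θ in (0:ℝ)..(2 * Real.pi),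
      f ((WithLp.equiv 2 (Fin 2 → ℝ)).symm ![Real.cos θ, Real.sin θ]) ^ 2)
      = ∫ θ in (0:ℝ)..(2 * π), f (uvec θ) ^ 2 := rfl
  rw [hbdy, hpolar, hper]
  linarith
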